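/- For every x ∈ [0,1]^d, the set of levels q ∈ {1,…,N} for which x does NOT belong to any hypercube 𝐂_q^𝐣 := I_q^{j₁} × ⋯ × I_q^{j_d} (with the j_p ranging over the integers) has cardinality at most d. Equivalently, every x ∈ [0,1]^d is covered by a hypercube 𝐂_q^𝐣 for at least N−d values of q. -/
import Mathlib

/-- If y is not covered by any interval of level q, then y lies in a gap. -/
lemma gap_of_miss (N : ℕ) (hN : 2 ≤ N) (δ : ℝ) (hδ : 0 < δ)
    (h : ℝ) (hh : h = (N : ℝ) * δ) (y : ℝ) (q : ℕ)
    (H : ¬ ∃ j : ℤ, y ∈ Set.Icc ((j : ℝ) * h + (q : ℝ) * δ)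
      (((j : ℝ) + 1) * h + ((q : ℝ) - 1) * δ)) :
    ∃ j : ℤ, (j : ℝ) * h + ((q : ℝ) - 1) * δ < y ∧ y < (j : ℝ) * h + (q : ℝ) * δ := by
  push_neg at H
  have hN2 : (2 : ℝ) ≤ N := by exact_mod_cast hN
  have hhpos : 0 < h := by rw [hh]; nlinarith
  set j : ℤ := ⌊(y - ((q : ℝ) - 1) * δ) / h⌋ with hjdef
  have h1 : (j : ℝ) * h ≤ y - ((q : ℝ) - 1) * δ := by
    have h0 := Int.floor_le ((y - ((q : ℝ) - 1) * δ) / h)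
    rw [← hjdef] at h0
    calc (j : ℝ) * h ≤ ((y - ((q : ℝ) - 1) * δ) / h) * h := by nlinarith
      _ = y - ((q : ℝ) - 1) * δ := by field_simp
  have h2 : y - ((q : ℝ) - 1) * δ < ((j : ℝ) + 1) * h := by
    have h0 := Int.lt_floor_add_one ((y - ((q : ℝ) - 1) * δ) / h)
    rw [← hjdef] at h0
    have := (div_lt_iff₀ hhpos).mp h0
    linarith
  refine ⟨j, ?_, ?_⟩
  · by_contra hcon
    push_neg at hcon
    have heq : y = (j : ℝ) * h + ((q : ℝ) - 1) * δ := by linarith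
    have := H (j - 1)
    rw [Set.mem_Icc] at this
    push_neg at this
    push_cast at this
    have hδh : δ ≤ h := by rw [hh]; nlinarith
    have hlow : ((j : ℝ) - 1) * h + (q : ℝ) * δ ≤ y := by rw [heq]; nlinarith
    have hup : y ≤ ((j : ℝ) - 1 + 1) * h + ((q : ℝ) - 1) * δ := by rw [heq]; ring_nf; nlinarith
    have := this hlow
    linarith
  · by_contra hcon
    push_neg at hcon
    have := H j
    rw [Set.mem_Icc] at this
    push_neg at this
    have := this hcon
    linarith

/-- A point can miss at most one level. -/
lemma level_unique (N : ℕ) (hN : 2 ≤ N) (δ : ℝ) (hδ : 0 < δ)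
    (h : ℝ) (hh : h = (N : ℝ) * δ) (y : ℝ)
    (q q' : ℕ) (hq1 : 1 ≤ q) (hqN : q ≤ N) (hq1' : 1 ≤ q') (hqN' : q' ≤ N)
    (H : ¬ ∃ j : ℤ, y ∈ Set.Icc ((j : ℝ) * h + (q : ℝ) * δ)
      (((j : ℝ) + 1) * h + ((q : ℝ) - 1) * δ))
    (H' : ¬ ∃ j : ℤ, y ∈ Set.Icc ((j : ℝ) * h + (q' : ℝ) * δ)
      (((j : ℝ) + 1) * h + ((q' : ℝ) - 1) * δ)) :
    q = q' := by
  obtain ⟨j, a1, a2⟩ := gap_of_miss N hN δ hδ h hh y q H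
  obtain ⟨j', b1, b2⟩ := gap_of_miss N hN δ hδ h hh y q' H'
  -- set m = j*N + q, m' = j'*N + q' : the gaps are ((m-1)δ, mδ), so m = m'.
  set m : ℤ := j * (N : ℤ) + (q : ℤ) with hm
  set m' : ℤ := j' * (N : ℤ) + (q' : ℤ) with hm'
  rw [hh] at a1 a2 b1 b2
  have hma : ((m : ℝ) - 1) * δ < y ∧ y < (m : ℝ) * δ := by
    constructor <;> · push_cast [hm]; nlinarith
  have hmb : ((m' : ℝ) - 1) * δ < y ∧ y < (m' : ℝ) * δ := by
    constructor <;> · push_cast [hm']; nlinarith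
  have hmm : m = m' := by
    have h1 : ((m : ℝ) - 1) * δ < (m' : ℝ) * δ := lt_trans hma.1 hmb.2
    have h2 : ((m' : ℝ) - 1) * δ < (m : ℝ) * δ := lt_trans hmb.1 hma.2
    have i1 : (m : ℝ) - 1 < m' := by nlinarith
    have i2 : (m' : ℝ) - 1 < m := by nlinarith
    have j1 : m - 1 < m' := by exact_mod_cast i1
    have j2 : m' - 1 < m := by exact_mod_cast i2
    omega
  have hdvd : (N : ℤ) ∣ ((q' : ℤ) - (q : ℤ)) := ⟨j - j', by rw [hm, hm'] at hmm; linarith⟩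
  have habs : |(q' : ℤ) - (q : ℤ)| < (N : ℤ) := by
    rw [abs_lt]; omega
  have := Int.eq_zero_of_abs_lt_dvd hdvd habs
  omega

/-- each x ∈ [0,1]^d misses the hypercubes of at most d of the N levels. -/
theorem hypercube_miss_at_most_d
    (d N : ℕ) (hd : 2 ≤ d) (hN : 2 ≤ N) (δ : ℝ) (hδ : 0 < δ)
    (h : ℝ) (hh : h = (N : ℝ) * δ)
    (J : ℕ) (hJ : 0 < J) (hJh : (J : ℝ) * h = 1) :
    ∀ x : Fin d → ℝ, (∀ p, x p ∈ Set.Icc (0 : ℝ) 1) →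
      Set.ncard {q : ℕ | 1 ≤ q ∧ q ≤ N ∧
        ¬ ∃ jv : Fin d → ℤ, ∀ p,
          x p ∈ Set.Icc ((jv p : ℝ) * h + (q : ℝ) * δ)
            (((jv p : ℝ) + 1) * h + ((q : ℝ) - 1) * δ)} ≤ d := by
  intro x hx
  classical
  set S : Set ℕ := {q : ℕ | 1 ≤ q ∧ q ≤ N ∧
      ¬ ∃ jv : Fin d → ℤ, ∀ p,
        x p ∈ Set.Icc ((jv p : ℝ) * h + (q : ℝ) * δ)
          (((jv p : ℝ) + 1) * h + ((q : ℝ) - 1) * δ)} with hS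
  -- each q ∈ S has some bad coordinate
  have key : ∀ q ∈ S, ∃ p : Fin d, ¬ ∃ j : ℤ,
      x p ∈ Set.Icc ((j : ℝ) * h + (q : ℝ) * δ)
        (((j : ℝ) + 1) * h + ((q : ℝ) - 1) * δ) := by
    intro q hq
    obtain ⟨-, -, hq3⟩ := hq
    by_contra hcon
    push_neg at hcon
    exact hq3 ⟨fun p => (hcon p).choose, fun p => (hcon p).choose_spec⟩
  -- choice function
  have hBad : ∀ p : Fin d, ∀ q ∈ S, ∀ q' ∈ S,
      (¬ ∃ j : ℤ, x p ∈ Set.Icc ((j : ℝ) * h + (q : ℝ) * δ)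
        (((j : ℝ) + 1) * h + ((q : ℝ) - 1) * δ)) →
      (¬ ∃ j : ℤ, x p ∈ Set.Icc ((j : ℝ) * h + (q' : ℝ) * δ)
        (((j : ℝ) + 1) * h + ((q' : ℝ) - 1) * δ)) → q = q' := by
    intro p q hq q' hq' H H'
    exact level_unique N hN δ hδ h hh (x p) q q' hq.1 hq.2.1 hq'.1 hq'.2.1 H H'
  let g : Fin d → ℕ := fun p =>
    if hp : ∃ q, q ∈ S ∧ ¬ ∃ j : ℤ,
        x p ∈ Set.Icc ((j : ℝ) * h + (q : ℝ) * δ)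
          (((j : ℝ) + 1) * h + ((q : ℝ) - 1) * δ)
    then hp.choose else 0
  have hsub : S ⊆ Set.range g := by
    intro q hq
    obtain ⟨p, hp⟩ := key q hq
    have hex : ∃ q', q' ∈ S ∧ ¬ ∃ j : ℤ,
        x p ∈ Set.Icc ((j : ℝ) * h + (q' : ℝ) * δ)
          (((j : ℝ) + 1) * h + ((q' : ℝ) - 1) * δ) := ⟨q, hq, hp⟩
    refine ⟨p, ?_⟩
    have : g p = hex.choose := dif_pos hex
    rw [this]
    exact hBad p hex.choose hex.choose_spec.1 q hq hex.choose_spec.2 hp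
  calc S.ncard ≤ (Set.range g).ncard :=
        Set.ncard_le_ncard hsub (Set.finite_range g)
    _ = (g '' Set.univ).ncard := by rw [Set.image_univ]
    _ ≤ (Set.univ : Set (Fin d)).ncard := Set.ncard_image_le Set.finite_univ
    _ = d := by rw [Set.ncard_univ]; simp
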